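/- Let q ≥ 0 be an integer, r_0 > 0 and r > r_0. Let J : [r_0, r] → ℝ be continuous, and let H : (r_0, r] → ℝ be continuous with H(z) ≥ H_L(z) := (q·(z/r_0)^(2q+2) + 1) / ((z/r_0)^(2q+2) − 1) for all z ∈ (r_0, r], and such that ∫_ρ^r (H(z) − 1)/z dz is finite for every ρ ∈ (r_0, r]. Then |∫_{r_0}^r ρ² · J(ρ) · exp(−∫_ρ^r (H(z) − 1)/z dz) dρ| ≤ (r² / √((r/r_0)^(2q+2) − 1)) · ∫_{r_0}^r |J(ρ)| · √((ρ/r_0)^(2q+2) − 1) dρ. -/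

import Mathlib

open MeasureTheory

lemma alg_aux (q : ℕ) (z r₀ : ℝ) (hz : z ≠ 0) (hr₀ : r₀ ≠ 0)
    (hx : (z/r₀)^(2*q+2) - 1 ≠ 0) :
    (((q:ℝ)*(z/r₀)^(2*q+2)+1)/((z/r₀)^(2*q+2)-1) - 1)/z
    = -(2 * z⁻¹ - (((2*q+2:ℕ):ℝ) * (z/r₀)^(2*(q:ℕ)+2-1) * r₀⁻¹ / ((z/r₀)^(2*q+2)-1))/2) := by
  have key : (z/r₀)^(2*(q:ℕ)+2-1) * r₀⁻¹ = (z/r₀)^(2*q+2) * z⁻¹ := by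
    have h : (z/r₀)^(2*q+2) = (z/r₀)^(2*q+1) * (z/r₀) := by ring
    rw [show 2*q+2-1 = 2*q+1 from rfl, h]
    field_simp
  rw [mul_assoc, key]
  generalize (z/r₀)^(2*q+2) = y at hx ⊢
  push_cast
  field_simp
  ring

lemma deriv_aux (q : ℕ) (r₀ : ℝ) (z : ℝ) (hz : 0 < z)
    (hx : (z/r₀)^(2*q+2) - 1 ≠ 0) :
    HasDerivAt (fun z => 2*Real.log z - Real.log ((z/r₀)^(2*q+2) - 1)/2)
      (2 * z⁻¹ - (((2*q+2:ℕ):ℝ) * (z/r₀)^(2*(q:ℕ)+2-1) * r₀⁻¹ / ((z/r₀)^(2*q+2) - 1))/2) z := by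
  have h1 : HasDerivAt (fun z : ℝ => (z/r₀)^(2*q+2) - 1)
      (((2*q+2:ℕ):ℝ) * (z/r₀)^(2*(q:ℕ)+2-1) * r₀⁻¹) z := by
    have := (((hasDerivAt_id z).div_const r₀).pow (2*q+2)).sub_const 1
    simpa [div_eq_mul_inv] using this
  exact ((Real.hasDerivAt_log hz.ne').const_mul 2).sub ((h1.log hx).div_const 2)

/-- Bound on the momentum-constraint solution:
`|∫_{r₀}^r ρ² J(ρ) exp(−∫_ρ^r (H(z)−1)/z dz) dρ|
  ≤ (r²/√((r/r₀)^(2q+2) − 1)) ∫_{r₀}^r |J(ρ)| √((ρ/r₀)^(2q+2) − 1) dρ`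
whenever `H ≥ H_L` on `(r₀, r]`. -/
theorem K_phiphi_bound
    (q : ℕ) (r₀ r : ℝ) (hr₀ : 0 < r₀) (hr : r₀ < r)
    (J H : ℝ → ℝ) (hJ : ContinuousOn J (Set.Icc r₀ r))
    (hH : ContinuousOn H (Set.Ioc r₀ r))
    (hHl : ∀ z ∈ Set.Ioc r₀ r,
      ((q : ℝ) * (z / r₀) ^ (2 * q + 2) + 1) / ((z / r₀) ^ (2 * q + 2) - 1) ≤ H z)
    (hHint : ∀ ρ ∈ Set.Ioc r₀ r,
      IntervalIntegrable (fun z => (H z - 1) / z) MeasureTheory.volume ρ r) :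
    |∫ ρ in r₀..r, ρ ^ 2 * J ρ * Real.exp (-∫ z in ρ..r, (H z - 1) / z)| ≤
      (r ^ 2 / Real.sqrt ((r / r₀) ^ (2 * q + 2) - 1)) *
        ∫ ρ in r₀..r, |J ρ| * Real.sqrt ((ρ / r₀) ^ (2 * q + 2) - 1) := by
  have hr₀' : r₀ ≠ 0 := hr₀.ne'
  set g : ℝ → ℝ := fun z => 2*Real.log z - Real.log ((z/r₀)^(2*q+2) - 1)/2 with hg
  have hxgt : ∀ z, r₀ < z → 0 < (z/r₀)^(2*q+2) - 1 := by
    intro z hz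
    have : 1 < (z/r₀)^(2*q+2) := one_lt_pow₀ ((one_lt_div hr₀).mpr hz) (by omega)
    linarith
  have hzpos : ∀ z, r₀ < z → (0:ℝ) < z := fun z hz => lt_trans hr₀ hz
  -- exp (g z) = z^2 / sqrt ((z/r₀)^(2q+2) - 1)
  have hexp : ∀ z, r₀ < z →
      Real.exp (g z) = z^2 / Real.sqrt ((z/r₀)^(2*q+2) - 1) := by
    intro z hz
    have h1 : (0:ℝ) < (z/r₀)^(2*q+2) - 1 := hxgt z hz
    have hz0 : (0:ℝ) < z := hzpos z hz
    have : g z = Real.log (z^2 / Real.sqrt ((z/r₀)^(2*q+2) - 1)) := by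
      rw [Real.log_div (by positivity) (by positivity), Real.log_sqrt h1.le,
        Real.log_pow]
      push_cast [hg]
      ring
    rw [this, Real.exp_log (by positivity)]
  set C : ℝ := r ^ 2 / Real.sqrt ((r / r₀) ^ (2 * q + 2) - 1) with hC
  have hC0 : 0 ≤ C := div_nonneg (sq_nonneg r) (Real.sqrt_nonneg _)
  -- key pointwise bound
  have key : ∀ ρ ∈ Set.Ioc r₀ r,
      |ρ ^ 2 * J ρ * Real.exp (-∫ z in ρ..r, (H z - 1) / z)| ≤
        C * (|J ρ| * Real.sqrt ((ρ / r₀) ^ (2 * q + 2) - 1)) := by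
    intro ρ hρ
    have hρ0 : (0:ℝ) < ρ := hzpos ρ hρ.1
    -- integral of the lower bound
    have hderiv : ∀ x ∈ Set.uIcc ρ r, HasDerivAt (fun z => -g z)
        ((((q:ℝ)*(x/r₀)^(2*q+2)+1)/((x/r₀)^(2*q+2)-1) - 1)/x) x := by
      intro x hx
      rw [Set.uIcc_of_le hρ.2] at hx
      have hx' : r₀ < x := lt_of_lt_of_le hρ.1 hx.1
      have h := (deriv_aux q r₀ x (hzpos x hx') (hxgt x hx').ne').neg
      rw [alg_aux q x r₀ (hzpos x hx').ne' hr₀' (hxgt x hx').ne']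
      exact h
    have hcontφ : ContinuousOn
        (fun x => (((q:ℝ)*(x/r₀)^(2*q+2)+1)/((x/r₀)^(2*q+2)-1) - 1)/x)
        (Set.uIcc ρ r) := by
      rw [Set.uIcc_of_le hρ.2]
      apply ContinuousOn.div
      · apply ContinuousOn.sub _ continuousOn_const
        apply ContinuousOn.div (by fun_prop) (by fun_prop)
        intro x hx
        exact (hxgt x (lt_of_lt_of_le hρ.1 hx.1)).ne'
      · fun_prop
      · intro x hx
        exact (hzpos x (lt_of_lt_of_le hρ.1 hx.1)).ne'
    have hintφ : IntervalIntegrable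
        (fun x => (((q:ℝ)*(x/r₀)^(2*q+2)+1)/((x/r₀)^(2*q+2)-1) - 1)/x)
        volume ρ r := hcontφ.intervalIntegrable
    have hFTC : (∫ x in ρ..r,
        (((q:ℝ)*(x/r₀)^(2*q+2)+1)/((x/r₀)^(2*q+2)-1) - 1)/x) = g ρ - g r := by
      rw [intervalIntegral.integral_eq_sub_of_hasDerivAt hderiv hintφ]
      ring
    have hmono : g ρ - g r ≤ ∫ z in ρ..r, (H z - 1)/z := by
      rw [← hFTC]
      apply intervalIntegral.integral_mono_on hρ.2 hintφ (hHint ρ hρ)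
      intro x hx
      have hx' : r₀ < x := lt_of_lt_of_le hρ.1 hx.1
      have hH' := hHl x ⟨hx', hx.2⟩
      have hx0 : (0:ℝ) < x := hzpos x hx'
      gcongr
    -- assemble
    have h1 : Real.exp (-∫ z in ρ..r, (H z - 1)/z) ≤ Real.exp (g r - g ρ) := by
      apply Real.exp_le_exp.mpr
      linarith
    have h2 : Real.exp (g r - g ρ) =
        C * (Real.sqrt ((ρ/r₀)^(2*q+2) - 1) / ρ^2) := by
      rw [Real.exp_sub, hexp r hr, hexp ρ hρ.1, hC]
      have hs : Real.sqrt ((ρ/r₀)^(2*q+2) - 1) ≠ 0 := by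
        exact (Real.sqrt_pos.mpr (hxgt ρ hρ.1)).ne'
      field_simp
    rw [abs_mul, abs_mul, abs_of_nonneg (sq_nonneg ρ), abs_of_nonneg (Real.exp_pos _).le]
    calc ρ^2 * |J ρ| * Real.exp (-∫ z in ρ..r, (H z - 1)/z)
        ≤ ρ^2 * |J ρ| * Real.exp (g r - g ρ) := by
          apply mul_le_mul_of_nonneg_left h1 (by positivity)
      _ = C * (|J ρ| * Real.sqrt ((ρ/r₀)^(2*q+2) - 1)) := by
          rw [h2]; field_simp
  -- RHS integrand is integrable (continuous)
  have hcontB : ContinuousOn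
      (fun ρ => C * (|J ρ| * Real.sqrt ((ρ/r₀)^(2*q+2) - 1))) (Set.uIcc r₀ r) := by
    rw [Set.uIcc_of_le hr.le]
    exact continuousOn_const.mul (hJ.abs.mul
      ((Real.continuous_sqrt.comp (by fun_prop)).continuousOn))
  have hintB : IntervalIntegrable
      (fun ρ => C * (|J ρ| * Real.sqrt ((ρ/r₀)^(2*q+2) - 1))) volume r₀ r :=
    hcontB.intervalIntegrable
  have hRHS : (∫ ρ in r₀..r, C * (|J ρ| * Real.sqrt ((ρ/r₀)^(2*q+2) - 1))) =
      C * ∫ ρ in r₀..r, |J ρ| * Real.sqrt ((ρ/r₀)^(2*q+2) - 1) :=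
    intervalIntegral.integral_const_mul _ _
  by_cases hf : IntervalIntegrable
      (fun ρ => ρ ^ 2 * J ρ * Real.exp (-∫ z in ρ..r, (H z - 1) / z)) volume r₀ r
  · have hae : ∀ᵐ x ∂(volume.restrict (Set.Icc r₀ r)),
        |x ^ 2 * J x * Real.exp (-∫ z in x..r, (H z - 1) / z)| ≤
          C * (|J x| * Real.sqrt ((x/r₀)^(2*q+2) - 1)) := by
      have h0 : ∀ᵐ x : ℝ ∂volume, x ≠ r₀ := by
        simp [ae_iff, Real.volume_singleton]
      filter_upwards [ae_restrict_of_ae h0, ae_restrict_mem measurableSet_Icc]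
        with x hne hmem
      exact key x ⟨lt_of_le_of_ne hmem.1 (Ne.symm hne), hmem.2⟩
    calc |∫ ρ in r₀..r, ρ ^ 2 * J ρ * Real.exp (-∫ z in ρ..r, (H z - 1) / z)|
        ≤ ∫ ρ in r₀..r, |ρ ^ 2 * J ρ * Real.exp (-∫ z in ρ..r, (H z - 1) / z)| :=
          intervalIntegral.abs_integral_le_integral_abs hr.le
      _ ≤ ∫ ρ in r₀..r, C * (|J ρ| * Real.sqrt ((ρ/r₀)^(2*q+2) - 1)) :=
          intervalIntegral.integral_mono_ae_restrict hr.le hf.abs hintB hae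
      _ = C * ∫ ρ in r₀..r, |J ρ| * Real.sqrt ((ρ/r₀)^(2*q+2) - 1) := hRHS
  · rw [intervalIntegral.integral_undef hf]
    simp only [abs_zero]
    apply mul_nonneg hC0
    apply intervalIntegral.integral_nonneg hr.le
    intro x _
    exact mul_nonneg (abs_nonneg _) (Real.sqrt_nonneg _)
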